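/- In the example with p = 3, the third differential of the perturbed end-point map does not vanish: with g₁^t = ∂/∂x₁ + (t−1)∂/∂x₂ − 3(t−1)x₁²∂/∂x₃ evaluated along computations at q₁ = (0,1,0), one has ⟨λ, [g₁^{t₁},[g₁^{t₂},g₁^{t₃}]](q₁)⟩ = 6(t₂ − t₃) for λ = (0,0,1), and for v₁(t) = 2π sin(2πt) the iterated integral 2∫₀¹∫₀^{t₁}∫₀^{t₂} 6 v₁(t₁)v₁(t₂)v₁(t₃)(t₂−t₃) dt₃ dt₂ dt₁ = 15. -/

import Mathlib

open Real

/-- Lie bracket of vector fields on a normed space. -/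
noncomputable def vbr {E : Type*} [NormedAddCommGroup E] [NormedSpace ℝ E]
    (g h : E → E) : E → E :=
  fun x => fderiv ℝ h x (g x) - fderiv ℝ g x (h x)

/-- Euclidean pairing on `ℝ³ = ℝ × ℝ × ℝ`. -/
def dot3 (a b : ℝ × ℝ × ℝ) : ℝ := a.1 * b.1 + a.2.1 * b.2.1 + a.2.2 * b.2.2

/-- The pulled-back vector field `g₁^t = ∂/∂x₁ + (t−1)∂/∂x₂ − 3(t−1)x₁²∂/∂x₃`. -/
def gOne (t : ℝ) : ℝ × ℝ × ℝ → ℝ × ℝ × ℝ :=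
  fun x => ((1:ℝ), t - 1, -3 * (t - 1) * x.1 ^ 2)

open ContinuousLinearMap in
lemma fderiv_gOne (t : ℝ) (x v : ℝ × ℝ × ℝ) :
    fderiv ℝ (gOne t) x v = (0, 0, -6 * (t - 1) * x.1 * v.1) := by
  have hsq : HasFDerivAt (fun y : ℝ × ℝ × ℝ => y.1 * y.1)
      (x.1 • fst ℝ ℝ (ℝ × ℝ) + x.1 • fst ℝ ℝ (ℝ × ℝ)) x :=
    hasFDerivAt_fst.mul hasFDerivAt_fst
  have h3 := hsq.const_mul (-3 * (t - 1))
  have hg : HasFDerivAt (gOne t)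
      (ContinuousLinearMap.prod 0 (ContinuousLinearMap.prod 0
        ((-3 * (t - 1)) • (x.1 • fst ℝ ℝ (ℝ × ℝ) + x.1 • fst ℝ ℝ (ℝ × ℝ))))) x := by
    have heq : gOne t = fun y : ℝ × ℝ × ℝ => ((1:ℝ), t - 1, -3 * (t - 1) * (y.1 * y.1)) := by
      funext y; simp only [gOne]; ring_nf
    rw [heq]
    exact (hasFDerivAt_const (1:ℝ) x).prodMk ((hasFDerivAt_const (t-1) x).prodMk h3)
  rw [hg.fderiv]
  simp [Prod.ext_iff]
  ring

open ContinuousLinearMap in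
lemma fderiv_lin3 (c : ℝ) (x v : ℝ × ℝ × ℝ) :
    fderiv ℝ (fun y : ℝ × ℝ × ℝ => ((0:ℝ), (0:ℝ), c * y.1)) x v = (0, 0, c * v.1) := by
  have hg : HasFDerivAt (fun y : ℝ × ℝ × ℝ => ((0:ℝ), (0:ℝ), c * y.1))
      (ContinuousLinearMap.prod 0 (ContinuousLinearMap.prod 0 (c • fst ℝ ℝ (ℝ × ℝ)))) x :=
    (hasFDerivAt_const (0:ℝ) x).prodMk ((hasFDerivAt_const (0:ℝ) x).prodMk
      (hasFDerivAt_fst.const_mul c))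
  rw [hg.fderiv]
  simp [Prod.ext_iff]

lemma vbr_gOne (a b : ℝ) :
    vbr (gOne a) (gOne b) = fun x : ℝ × ℝ × ℝ => ((0:ℝ), (0:ℝ), 6 * (a - b) * x.1) := by
  funext x
  simp only [vbr, fderiv_gOne]
  have h1 : (gOne a x).1 = 1 := rfl
  have h2 : (gOne b x).1 = 1 := rfl
  rw [h1, h2, Prod.mk_sub_mk, Prod.mk_sub_mk]
  norm_num
  ring

lemma hlin (t : ℝ) : HasDerivAt (fun u : ℝ => 2 * π * u) (2 * π) t := by
  simpa using (hasDerivAt_id t).const_mul (2 * π)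

lemma hds (t : ℝ) : HasDerivAt (fun u : ℝ => sin (2 * π * u)) (2 * π * cos (2 * π * t)) t := by
  have h := (hlin t).sin
  convert h using 1; ring

lemma hdc (t : ℝ) : HasDerivAt (fun u : ℝ => cos (2 * π * u)) (-(2 * π * sin (2 * π * t))) t := by
  have h := (hlin t).cos
  convert h using 1; ring

lemma lvl3 (K b : ℝ) :
    (∫ u in (0:ℝ)..b, K * (2 * π * sin (2 * π * u)) * (b - u)) =
      K * (b - sin (2 * π * b) / (2 * π)) := by
  have hder : ∀ u ∈ Set.uIcc (0:ℝ) b,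
      HasDerivAt (fun u : ℝ => K * ((u - b) * cos (2 * π * u) - sin (2 * π * u) / (2 * π)))
        (K * (2 * π * sin (2 * π * u)) * (b - u)) u := by
    intro u _
    have h := (((hasDerivAt_id' (x := u)).sub_const b).mul (hdc u)).sub
      ((hds u).div_const (2 * π))
    have h2 := h.const_mul K
    have key : K * (1 * cos (2 * π * u) + (u - b) * -(2 * π * sin (2 * π * u)) -
        2 * π * cos (2 * π * u) / (2 * π)) = K * (2 * π * sin (2 * π * u)) * (b - u) := by
      have hπ : (π:ℝ) ≠ 0 := Real.pi_ne_zero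
      field_simp
      ring
    rw [key] at h2
    exact h2
  have hint : IntervalIntegrable (fun u : ℝ => K * (2 * π * sin (2 * π * u)) * (b - u))
      MeasureTheory.volume 0 b := by
    apply Continuous.intervalIntegrable; fun_prop
  rw [intervalIntegral.integral_eq_sub_of_hasDerivAt hder hint]
  have hπ : (π:ℝ) ≠ 0 := Real.pi_ne_zero
  rw [mul_zero, Real.sin_zero, Real.cos_zero]
  field_simp
  ring

lemma lvl2 (K a : ℝ) :
    (∫ u in (0:ℝ)..a, K * (2 * π * sin (2 * π * u)) * (u - sin (2 * π * u) / (2 * π))) =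
      K * (sin (2 * π * a) / (2 * π) + sin (2 * π * a) * cos (2 * π * a) / (4 * π) -
        a / 2 - a * cos (2 * π * a)) := by
  have hder : ∀ u ∈ Set.uIcc (0:ℝ) a,
      HasDerivAt (fun u : ℝ => K * (sin (2 * π * u) / (2 * π) +
          sin (2 * π * u) * cos (2 * π * u) / (4 * π) - u / 2 - u * cos (2 * π * u)))
        (K * (2 * π * sin (2 * π * u)) * (u - sin (2 * π * u) / (2 * π))) u := by
    intro u _
    have h := ((((hds u).div_const (2 * π)).add
        (((hds u).mul (hdc u)).div_const (4 * π))).sub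
        ((hasDerivAt_id' (x := u)).div_const 2)).sub
        ((hasDerivAt_id' (x := u)).mul (hdc u))
    have h2 := h.const_mul K
    have key : K * (2 * π * cos (2 * π * u) / (2 * π) +
        (2 * π * cos (2 * π * u) * cos (2 * π * u) +
          sin (2 * π * u) * -(2 * π * sin (2 * π * u))) / (4 * π) - 1 / 2 -
        (1 * cos (2 * π * u) + u * -(2 * π * sin (2 * π * u)))) =
        K * (2 * π * sin (2 * π * u)) * (u - sin (2 * π * u) / (2 * π)) := by
      have hπ : (π:ℝ) ≠ 0 := Real.pi_ne_zero
      have hid := Real.sin_sq_add_cos_sq (2 * π * u)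
      field_simp
      linear_combination (4 * K) * hid
    rw [key] at h2
    exact h2
  have hint : IntervalIntegrable
      (fun u : ℝ => K * (2 * π * sin (2 * π * u)) * (u - sin (2 * π * u) / (2 * π)))
      MeasureTheory.volume 0 a := by
    apply Continuous.intervalIntegrable; fun_prop
  rw [intervalIntegral.integral_eq_sub_of_hasDerivAt hder hint]
  rw [mul_zero, Real.sin_zero, Real.cos_zero]
  ring

lemma lvl1 :
    (∫ t in (0:ℝ)..1, 6 * (2 * π * sin (2 * π * t)) *
        (sin (2 * π * t) / (2 * π) + sin (2 * π * t) * cos (2 * π * t) / (4 * π) -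
          t / 2 - t * cos (2 * π * t))) = 15 / 2 := by
  have hder : ∀ t ∈ Set.uIcc (0:ℝ) 1,
      HasDerivAt (fun t : ℝ => 3 * t + (3/2) * t * (1 - 2 * sin (2 * π * t) ^ 2) +
          3 * t * cos (2 * π * t) - 9 * sin (2 * π * t) * cos (2 * π * t) / (4 * π) -
          3 * sin (2 * π * t) / (2 * π) + sin (2 * π * t) ^ 3 / (2 * π))
        (6 * (2 * π * sin (2 * π * t)) *
          (sin (2 * π * t) / (2 * π) + sin (2 * π * t) * cos (2 * π * t) / (4 * π) -
            t / 2 - t * cos (2 * π * t))) t := by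
    intro t _
    have hS := hds t
    have hC := hdc t
    have hS2 : HasDerivAt (fun u : ℝ => sin (2 * π * u) ^ 2)
        (2 * sin (2 * π * t) * (2 * π * cos (2 * π * t))) t := by
      have h := hS.mul hS
      have e : (fun u : ℝ => sin (2 * π * u) ^ 2) =
          fun u : ℝ => sin (2 * π * u) * sin (2 * π * u) := by funext y; ring
      rw [e]; exact h.congr_deriv (by ring)
    have hS3 : HasDerivAt (fun u : ℝ => sin (2 * π * u) ^ 3)
        (3 * sin (2 * π * t) ^ 2 * (2 * π * cos (2 * π * t))) t := by
      have h := hS2.mul hS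
      have e : (fun u : ℝ => sin (2 * π * u) ^ 3) =
          fun u : ℝ => sin (2 * π * u) ^ 2 * sin (2 * π * u) := by funext y; ring
      rw [e]; exact h.congr_deriv (by ring)
    have hA : HasDerivAt (fun u : ℝ => (3:ℝ) * u) (3:ℝ) t := by
      simpa using (hasDerivAt_id t).const_mul (3:ℝ)
    have hB : HasDerivAt (fun u : ℝ => (3/2 : ℝ) * u) (3/2 : ℝ) t := by
      simpa using (hasDerivAt_id t).const_mul (3/2 : ℝ)
    have h1 := hB.mul ((hasDerivAt_const t (1:ℝ)).sub (hS2.const_mul 2))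
    have h3 := hA.mul hC
    have h4 := ((hS.const_mul 9).mul hC).div_const (4 * π)
    have h5 := (hS.const_mul 3).div_const (2 * π)
    have h6 := hS3.div_const (2 * π)
    have h := ((((hA.add h1).add h3).sub h4).sub h5).add h6
    refine h.congr_deriv (Eq.symm ?_)
    have hπ : (π:ℝ) ≠ 0 := Real.pi_ne_zero
    have hid := Real.sin_sq_add_cos_sq (2 * π * t)
    simp only [Pi.sub_apply]
    field_simp
    linear_combination (36:ℝ) * hid
  have hint : IntervalIntegrable
      (fun t : ℝ => 6 * (2 * π * sin (2 * π * t)) *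
        (sin (2 * π * t) / (2 * π) + sin (2 * π * t) * cos (2 * π * t) / (4 * π) -
          t / 2 - t * cos (2 * π * t)))
      MeasureTheory.volume 0 1 := by
    apply Continuous.intervalIntegrable; fun_prop
  rw [intervalIntegral.integral_eq_sub_of_hasDerivAt hder hint]
  norm_num [Real.sin_two_pi, Real.cos_two_pi, Real.sin_zero, Real.cos_zero]

/-- in the example with `p = 3`,
`⟨λ,[g₁^{t₁},[g₁^{t₂},g₁^{t₃}]](q₁)⟩ = 6(t₂−t₃)` at `q₁ = (0,1,0)` for
`λ = (0,0,1)`, and for `v(t) = 2π sin(2πt)` the iterated integral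
`2∫₀¹∫₀^{t₁}∫₀^{t₂} 6v(t₁)v(t₂)v(t₃)(t₂−t₃) dt₃dt₂dt₁` equals `15`. -/
theorem third_differential_nonvanishing_example :
    (∀ t₁ t₂ t₃ : ℝ,
      dot3 ((0:ℝ), (0:ℝ), (1:ℝ))
        (vbr (gOne t₁) (vbr (gOne t₂) (gOne t₃)) ((0:ℝ), (1:ℝ), (0:ℝ))) =
        6 * (t₂ - t₃)) ∧
    (2 * ∫ t₁ in (0:ℝ)..1, ∫ t₂ in (0:ℝ)..t₁, ∫ t₃ in (0:ℝ)..t₂,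
        6 * (2 * π * sin (2 * π * t₁)) * (2 * π * sin (2 * π * t₂)) *
          (2 * π * sin (2 * π * t₃)) * (t₂ - t₃)) = 15 := by
  constructor
  · intro t₁ t₂ t₃
    rw [vbr_gOne t₂ t₃]
    simp only [vbr, fderiv_gOne, fderiv_lin3]
    have h1 : (gOne t₁ ((0:ℝ), (1:ℝ), (0:ℝ))).1 = 1 := rfl
    rw [h1]
    simp [dot3, Prod.ext_iff]
  · have step3 : ∀ t₁ t₂ : ℝ,
        (∫ t₃ in (0:ℝ)..t₂, 6 * (2 * π * sin (2 * π * t₁)) * (2 * π * sin (2 * π * t₂)) *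
          (2 * π * sin (2 * π * t₃)) * (t₂ - t₃)) =
        6 * (2 * π * sin (2 * π * t₁)) * (2 * π * sin (2 * π * t₂)) *
          (t₂ - sin (2 * π * t₂) / (2 * π)) := fun t₁ t₂ =>
      lvl3 (6 * (2 * π * sin (2 * π * t₁)) * (2 * π * sin (2 * π * t₂))) t₂
    have step2 : ∀ t₁ : ℝ,
        (∫ t₂ in (0:ℝ)..t₁, 6 * (2 * π * sin (2 * π * t₁)) * (2 * π * sin (2 * π * t₂)) *
          (t₂ - sin (2 * π * t₂) / (2 * π))) =
        6 * (2 * π * sin (2 * π * t₁)) *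
          (sin (2 * π * t₁) / (2 * π) + sin (2 * π * t₁) * cos (2 * π * t₁) / (4 * π) -
            t₁ / 2 - t₁ * cos (2 * π * t₁)) := fun t₁ =>
      lvl2 (6 * (2 * π * sin (2 * π * t₁))) t₁
    simp only [step3, step2, lvl1]
    norm_num
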